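/- arXiv:1003.3972 — 3 statements merged into one kernel-verified Lean document; each statement's English description precedes it below -/
import Mathlib

section
/- Let M be a finitely generated module over a Noetherian local ring with dimension filtration D_0 ⊂ D_1 ⊂ … ⊂ D_t = M, and let 0 = ⋂_{p∈Ass(M)} N(p) be a reduced primary decomposition. Then D_i = ⋂_{dim R/p ≥ dim D_{i+1}} N(p) for each i < t. -/
open IsLocalRing

/-- Krull dimension of a module: the Krull dimension of its support in `Spec R`. -/
noncomputable def mDim (R : Type*) [CommRing R] (M : Type*) [AddCommGroup M] [Module R M] :
    WithBot (WithTop ℕ) :=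
  Order.krullDim (Module.support R M)

/-- Length of a module, as the Krull dimension of its lattice of submodules. -/
noncomputable def eLength (R : Type*) [Ring R] (M : Type*) [AddCommGroup M] [Module R M] : ℕ∞ :=
  WithBot.unbotD 0 (Order.krullDim (Submodule R M))

/-- A system of parameters of `M`: `n = dim M` elements of the maximal ideal such that the
quotient of `M` by them has finite length. -/
def IsSOP (R : Type*) [CommRing R] [IsLocalRing R] (M : Type*) [AddCommGroup M] [Module R M]
    (n : ℕ) (x : Fin n → R) : Prop :=
  mDim R M = (n : WithBot (WithTop ℕ)) ∧ (∀ j, x j ∈ maximalIdeal R) ∧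
    IsFiniteLength R (M ⧸ (Ideal.span (Set.range x) • (⊤ : Submodule R M)))

/-- A good system of parameters of `M` with respect to the filtration `F 0 ⊆ F 1 ⊆ ... ⊆ F t = M`:
a system of parameters `x` such that `(x_{d_i+1}, …, x_d) M ∩ F i = 0` where `d_i = dim (F i)`
(indices are zero-based, so the condition is over `j` with `d_i ≤ j`). -/
def IsGoodSOP (R : Type*) [CommRing R] [IsLocalRing R] (M : Type*) [AddCommGroup M] [Module R M]
    (t : ℕ) (F : ℕ → Submodule R M) (n : ℕ) (x : Fin n → R) : Prop :=
  IsSOP R M n x ∧ ∀ i < t,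
    (Ideal.span (x '' {j | mDim R ↥(F i) ≤ (j.val : WithBot (WithTop ℕ))}) • (⊤ : Submodule R M)) ⊓ F i = ⊥

/-- `D 0 ⊆ D 1 ⊆ ... ⊆ D t = M` is the dimension filtration of `M`: `D 0 = H^0_m(M)`,
dimensions strictly increase, and each `D i` is the largest submodule of `D (i+1)` of strictly
smaller dimension. -/
def IsDimFiltration (R : Type*) [CommRing R] [IsLocalRing R] (M : Type*) [AddCommGroup M]
    [Module R M] (t : ℕ) (D : ℕ → Submodule R M) : Prop :=
  D t = ⊤ ∧
  (∀ x : M, x ∈ D 0 ↔ ∃ n : ℕ, ∀ r ∈ (maximalIdeal R) ^ n, r • x = 0) ∧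
  (∀ i < t, mDim R ↥(D i) < mDim R ↥(D (i + 1))) ∧
  (∀ i < t, ∀ N : Submodule R M, N ≤ D (i + 1) → mDim R ↥N < mDim R ↥(D (i + 1)) → N ≤ D i)

/-- A filtration `F 0 ⊆ F 1 ⊆ ... ⊆ F t = M` satisfying the dimension condition:
strictly increasing dimensions. -/
def DimCond (R : Type*) [CommRing R] (M : Type*) [AddCommGroup M] [Module R M]
    (t : ℕ) (F : ℕ → Submodule R M) : Prop :=
  F t = ⊤ ∧ (∀ i < t, F i ≤ F (i + 1)) ∧ ∀ i < t, mDim R ↥(F i) < mDim R ↥(F (i + 1))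

/-- A ring is catenary if any two saturated chains of primes with the same endpoints have
the same length. -/
def IsCatenary (R : Type*) [CommRing R] : Prop :=
  ∀ c₁ c₂ : LTSeries (PrimeSpectrum R), c₁.head = c₂.head → c₁.last = c₂.last →
    (∀ i : Fin c₁.length, ¬ ∃ q, c₁ i.castSucc < q ∧ q < c₁ i.succ) →
    (∀ i : Fin c₂.length, ¬ ∃ q, c₂ i.castSucc < q ∧ q < c₂ i.succ) →
    c₁.length = c₂.length

/-- A finitely generated module over a Noetherian local ring is Cohen-Macaulay if it is zero or
has a system of parameters which is a regular sequence on it. -/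
def IsCMMod (R : Type*) [CommRing R] [IsLocalRing R] (M : Type*) [AddCommGroup M]
    [Module R M] : Prop :=
  Subsingleton M ∨
    ∃ (n : ℕ) (x : Fin n → R), IsSOP R M n x ∧ RingTheory.Sequence.IsRegular M (List.ofFn x)

/-- A module is sequentially Cohen-Macaulay if every quotient of consecutive terms of its
dimension filtration is Cohen-Macaulay. -/
def IsSeqCM (R : Type*) [CommRing R] [IsLocalRing R] (M : Type*) [AddCommGroup M]
    [Module R M] : Prop :=
  ∃ (t : ℕ) (D : ℕ → Submodule R M), IsDimFiltration R M t D ∧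
    ∀ i, 1 ≤ i → i ≤ t → IsCMMod R (↥(D i) ⧸ (D (i - 1)).comap (D i).subtype)


section Aux

variable {R : Type*} [CommRing R] {M : Type*} [AddCommGroup M] [Module R M]

lemma assoc_subset_union [IsNoetherianRing R] (N : Submodule R M) :
    associatedPrimes R M ⊆ associatedPrimes R ↥N ∪ associatedPrimes R (M ⧸ N) := by
  rintro p hpA
  obtain ⟨hp, x, hx⟩ := isAssociatedPrime_iff.mp hpA
  have hxmem : ∀ a : R, a ∈ p ↔ a • x = 0 := fun a => by
    rw [hx, Submodule.mem_colon_singleton, Submodule.mem_bot]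
  by_cases h : ∀ y ∈ (R ∙ x) ⊓ N, y = (0 : M)
  · right
    refine isAssociatedPrime_iff.mpr ⟨hp, N.mkQ x, ?_⟩
    ext r
    rw [Submodule.mem_colon_singleton, Submodule.mem_bot, hxmem]
    constructor
    · intro hr
      show r • N.mkQ x = 0
      rw [← map_smul, hr, map_zero]
    · intro hr
      have h1 : N.mkQ (r • x) = 0 := by rw [map_smul]; exact hr
      have h2 : r • x ∈ N := (Submodule.Quotient.mk_eq_zero N).mp h1
      exact h _ ⟨Submodule.smul_mem _ r (Submodule.mem_span_singleton_self x), h2⟩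
  · push_neg at h
    obtain ⟨y, hy, hy0⟩ := h
    obtain ⟨s, rfl⟩ := Submodule.mem_span_singleton.mp hy.1
    have hs : s ∉ p := fun hsp => hy0 ((hxmem s).mp hsp)
    left
    refine isAssociatedPrime_iff.mpr ⟨hp, ⟨s • x, hy.2⟩, ?_⟩
    ext r
    rw [Submodule.mem_colon_singleton, Submodule.mem_bot]
    have h2 : (r • (⟨s • x, hy.2⟩ : ↥N) = 0) ↔ (r * s) • x = (0 : M) := by
      rw [← Submodule.coe_eq_zero, ← smul_smul]; rfl
    rw [h2, ← hxmem]
    exact ⟨fun hr => Ideal.mul_mem_right s p hr, fun hr => (hp.mem_or_mem hr).resolve_right hs⟩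

end Aux


section Fin

variable {R : Type*} [CommRing R] [IsNoetherianRing R] {M : Type*} [AddCommGroup M] [Module R M]

lemma assoc_quot_finite [IsNoetherian R M] (N : Submodule R M) :
    (associatedPrimes R (M ⧸ N)).Finite := by
  induction N using IsNoetherian.induction with
  | _ N ih =>
  by_cases hN : N = ⊤
  · subst hN
    haveI : Subsingleton (M ⧸ (⊤ : Submodule R M)) :=
      Submodule.Quotient.subsingleton_iff.mpr rfl
    rw [associatedPrimes.eq_empty_of_subsingleton]
    exact Set.finite_empty
  · haveI : Nontrivial (M ⧸ N) := Submodule.Quotient.nontrivial_iff.mpr hN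
    obtain ⟨p, hpA⟩ := associatedPrimes.nonempty R (M ⧸ N)
    obtain ⟨hp1, xb, hxb⟩ := isAssociatedPrime_iff.mp hpA
    obtain ⟨x, rfl⟩ := N.mkQ_surjective xb
    have hxN : x ∉ N := by
      intro hxN
      apply hp1.ne_top
      rw [hxb]
      have : N.mkQ x = 0 := (Submodule.Quotient.mk_eq_zero N).mpr hxN
      rw [this, eq_top_iff]
      intro a _
      rw [Submodule.mem_colon_singleton, smul_zero]
      exact Submodule.zero_mem _
    set N' := N ⊔ R ∙ x with hN'
    have hlt : N < N' := by
      rw [lt_iff_le_and_ne]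
      refine ⟨le_sup_left, fun hEq => hxN ?_⟩
      rw [hEq]
      exact le_sup_right (α := Submodule R M) (Submodule.mem_span_singleton_self x)
    have hfin' := ih N' hlt
    have hmap : Submodule.map N.mkQ N' = R ∙ N.mkQ x := by
      rw [hN', Submodule.map_sup, Submodule.map_span, Set.image_singleton]
      have : Submodule.map N.mkQ N = ⊥ := by
        rw [eq_bot_iff]
        rintro y ⟨z, hz, rfl⟩
        exact (Submodule.Quotient.mk_eq_zero N).mpr hz
      rw [this, bot_sup_eq]
    have key := assoc_subset_union (M := M ⧸ N) (Submodule.map N.mkQ N')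
    -- identify the two pieces
    have e1 : associatedPrimes R ↥(Submodule.map N.mkQ N') = {p} := by
      rw [hmap]
      have etors : (R ⧸ Ideal.torsionOf R (M ⧸ N) (N.mkQ x)) ≃ₗ[R] ↥(R ∙ N.mkQ x) :=
        Ideal.quotTorsionOfEquivSpanSingleton R (M ⧸ N) (N.mkQ x)
      have htors : Ideal.torsionOf R (M ⧸ N) (N.mkQ x) = p := by
        ext r
        rw [Ideal.mem_torsionOf_iff, hxb, Submodule.mem_colon_singleton, Submodule.mem_bot]
      rw [← LinearEquiv.AssociatedPrimes.eq etors, htors,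
        associatedPrimes.eq_singleton_of_isPrimary hp1.isPrimary, hp1.radical]
    have e2 : associatedPrimes R ((M ⧸ N) ⧸ (Submodule.map N.mkQ N')) =
        associatedPrimes R (M ⧸ N') := by
      exact LinearEquiv.AssociatedPrimes.eq
        (Submodule.quotientQuotientEquivQuotient N N' le_sup_left)
    rw [e1, e2] at key
    exact Set.Finite.subset (Set.Finite.union (Set.finite_singleton p) hfin') key

lemma assoc_finite [Module.Finite R M] : (associatedPrimes R M).Finite := by
  have := assoc_quot_finite (R := R) (M := M) ⊥
  rwa [LinearEquiv.AssociatedPrimes.eq (Submodule.quotEquivOfEqBot ⊥ rfl)] at this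

end Fin

section Nilp

variable {R : Type*} [CommRing R] [IsNoetherianRing R] {M : Type*} [AddCommGroup M] [Module R M]

lemma nilp_of_assoc_singleton [IsNoetherian R M] {q : Ideal R}
    (hq : associatedPrimes R M = {q}) {r : R} (hr : r ∈ q) :
    ∃ k : ℕ, ∀ x : M, r ^ k • x = 0 := by
  have hqprime : q.IsPrime := by
    have : q ∈ associatedPrimes R M := by rw [hq]; exact rfl
    exact this.isPrime
  set g : ℕ → Submodule R M := fun n => LinearMap.ker (LinearMap.lsmul R M (r ^ n)) with hg
  have hmono : Monotone g := by
    intro a b hab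
    intro x hx
    have hx' : r ^ a • x = 0 := hx
    show r ^ b • x = 0
    rw [← Nat.sub_add_cancel hab, pow_add, mul_smul, hx', smul_zero]
  obtain ⟨k, hk⟩ := monotone_stabilizes_iff_noetherian.mpr ‹IsNoetherian R M› ⟨g, hmono⟩
  refine ⟨k, ?_⟩
  by_contra hcon
  push_neg at hcon
  have hne : g k ≠ ⊤ := by
    intro htop
    obtain ⟨x, hx⟩ := hcon
    exact hx (htop ▸ Submodule.mem_top (x := x) : x ∈ g k)
  haveI : Nontrivial (M ⧸ g k) :=
    Submodule.Quotient.nontrivial_iff.mpr hne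
  have hinj : Function.Injective ((g k).liftQ (LinearMap.lsmul R M (r ^ k)) le_rfl) := by
    rw [← LinearMap.ker_eq_bot, Submodule.ker_liftQ, eq_bot_iff]
    intro y hy
    obtain ⟨z, hz, rfl⟩ := hy
    exact (Submodule.Quotient.mk_eq_zero _).mpr hz
  have hsub : associatedPrimes R (M ⧸ g k) ⊆ associatedPrimes R M :=
    associatedPrimes.subset_of_injective hinj
  obtain ⟨p, hp⟩ := associatedPrimes.nonempty R (M ⧸ g k)
  have hpq : p = q := by
    have := hsub hp; rwa [hq] at this
  obtain ⟨hp1, y, hy⟩ := isAssociatedPrime_iff.mp hp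
  have hry : r • y = 0 := by
    have : r ∈ (⊥ : Submodule R (M ⧸ g k)).colon {y} := by rw [← hy, hpq]; exact hr
    exact (Submodule.mem_bot R).mp (Submodule.mem_colon_singleton.mp this)
  have hy0 : y = 0 := by
    obtain ⟨y₀, rfl⟩ := (g k).mkQ_surjective y
    have h1 : (g k).mkQ (r • y₀) = 0 := by rw [map_smul]; exact hry
    have h2 : r • y₀ ∈ g k := (Submodule.Quotient.mk_eq_zero _).mp h1
    have h3 : y₀ ∈ g (k + 1) := by
      show r ^ (k + 1) • y₀ = 0
      have : r ^ k • (r • y₀) = 0 := h2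
      rw [pow_succ, mul_smul]
      rwa [smul_comm] at this
    have h4 : y₀ ∈ g k := by have := hk (k + 1) (Nat.le_succ k); exact (congrArg (fun (N : Submodule R M) => y₀ ∈ N) this).mpr h3
    exact (Submodule.Quotient.mk_eq_zero _).mpr h4
  apply hp1.ne_top
  rw [hy, hy0, eq_top_iff]
  intro a _
  rw [Submodule.mem_colon_singleton, smul_zero]
  exact Submodule.zero_mem _

end Nilp

section Dim

variable {R : Type*} [CommRing R]

noncomputable def quotSpecIso (I : Ideal R) :
    PrimeSpectrum (R ⧸ I) ≃o ↥(PrimeSpectrum.zeroLocus (I : Set R)) where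
  toFun p := ⟨⟨Ideal.comap (Ideal.Quotient.mk I) p.asIdeal, Ideal.IsPrime.comap _⟩, by
    intro a ha
    show a ∈ Ideal.comap (Ideal.Quotient.mk I) p.asIdeal
    rw [Ideal.mem_comap, Ideal.Quotient.eq_zero_iff_mem.mpr ha]
    exact p.asIdeal.zero_mem⟩
  invFun x := ⟨Ideal.map (Ideal.Quotient.mk I) x.1.asIdeal,
    Ideal.map_isPrime_of_surjective Ideal.Quotient.mk_surjective
      (by rw [Ideal.mk_ker]; exact x.2)⟩
  left_inv p := by
    ext1
    exact Ideal.map_comap_of_surjective _ Ideal.Quotient.mk_surjective p.asIdeal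
  right_inv x := by
    apply Subtype.ext
    ext1
    show Ideal.comap _ (Ideal.map _ _) = _
    rw [Ideal.comap_map_of_surjective _ Ideal.Quotient.mk_surjective, ← RingHom.ker_eq_comap_bot, Ideal.mk_ker,
      sup_eq_left.mpr x.2]
  map_rel_iff' {p q} := by
    show Ideal.comap (Ideal.Quotient.mk I) p.asIdeal ≤ Ideal.comap (Ideal.Quotient.mk I) q.asIdeal
      ↔ p ≤ q
    constructor
    · intro h
      intro z hz
      obtain ⟨w, rfl⟩ := Ideal.Quotient.mk_surjective z
      exact h hz
    · exact fun h => Ideal.comap_mono h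

lemma ringKrullDim_quotient_eq (I : Ideal R) :
    ringKrullDim (R ⧸ I) = Order.krullDim ↥(PrimeSpectrum.zeroLocus (I : Set R)) :=
  Order.krullDim_eq_of_orderIso (quotSpecIso I)

lemma krullDim_mono_set {s t : Set (PrimeSpectrum R)} (h : s ⊆ t) :
    Order.krullDim ↥s ≤ Order.krullDim ↥t :=
  Order.krullDim_le_of_strictMono (Set.inclusion h) (fun _ _ hab => hab)

end Dim

section E

variable {R : Type*} [CommRing R] {M : Type*} [AddCommGroup M] [Module R M]

lemma dim_quot_le_of_ann_le (N : Submodule R M) [Module.Finite R ↥N] {p : Ideal R}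
    (h : N.annihilator ≤ p) :
    ringKrullDim (R ⧸ p) ≤ Order.krullDim ↥(Module.support R ↥N) := by
  rw [ringKrullDim_quotient_eq]
  have h1 : Module.support R ↥N = PrimeSpectrum.zeroLocus (N.annihilator : Set R) :=
    Module.support_eq_zeroLocus
  rw [h1]
  exact Order.krullDim_le_of_strictMono
    (Set.inclusion (PrimeSpectrum.zeroLocus_anti_mono (by exact_mod_cast h)))
    (fun _ _ hab => hab)

lemma dim_lt_of_cover (N : Submodule R M) [Module.Finite R ↥N] (T : Finset (Ideal R))
    {d : WithBot (WithTop ℕ)} (hbot : ⊥ < d)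
    (hdim : ∀ q ∈ T, ringKrullDim (R ⧸ q) < d)
    (hcover : ∀ pp : PrimeSpectrum R, N.annihilator ≤ pp.asIdeal → ∃ q ∈ T, q ≤ pp.asIdeal) :
    Order.krullDim ↥(Module.support R ↥N) < d := by
  refine lt_of_le_of_lt (?_ : _ ≤ T.sup fun q => ringKrullDim (R ⧸ q)) ?_
  · unfold Order.krullDim
    apply iSup_le
    intro s
    have hhead : N.annihilator ≤ s.head.1.asIdeal :=
      Module.mem_support_iff_of_finite.mp s.head.2
    obtain ⟨q, hqT, hqle⟩ := hcover s.head.1 hhead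
    have hmem : ∀ j, (s j).1 ∈ PrimeSpectrum.zeroLocus (q : Set R) := by
      intro j
      have h0 : s.head ≤ s j := s.monotone (Fin.zero_le j)
      exact fun a ha => (h0 : s.head.1 ≤ (s j).1) (hqle ha)
    let s' : LTSeries (PrimeSpectrum (R ⧸ q)) :=
      ⟨s.length, fun j => (quotSpecIso q).symm ⟨(s j).1, hmem j⟩,
        fun j => (quotSpecIso q).symm.strictMono
          (by exact_mod_cast s.step j : (⟨(s j.castSucc).1, _⟩ : ↥(PrimeSpectrum.zeroLocus _)) < ⟨(s j.succ).1, hmem j.succ⟩)⟩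
    calc (s.length : WithBot ℕ∞) = s'.length := rfl
      _ ≤ Order.krullDim (PrimeSpectrum (R ⧸ q)) := Order.LTSeries.length_le_krullDim s'
      _ = ringKrullDim (R ⧸ q) := rfl
      _ ≤ T.sup fun q => ringKrullDim (R ⧸ q) := Finset.le_sup (f := fun q => ringKrullDim (R ⧸ q)) hqT
  · exact (Finset.sup_lt_iff hbot).mpr hdim

end E
/-- `D i = ⋂ { N p : dim R/p ≥ dim D (i+1) }` for the dimension filtration and a
reduced primary decomposition `0 = ⋂_{p ∈ Ass M} N p`. -/
theorem stmt3 {R M : Type*} [CommRing R] [IsNoetherianRing R] [IsLocalRing R]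
    [AddCommGroup M] [Module R M] [Module.Finite R M]
    (t : ℕ) (D : ℕ → Submodule R M) (hD : IsDimFiltration R M t D)
    (N : Ideal R → Submodule R M)
    (hprim : ∀ p ∈ associatedPrimes R M, associatedPrimes R (M ⧸ N p) = {p})
    (hint : (⨅ p ∈ associatedPrimes R M, N p) = ⊥)
    (hred : ∀ p ∈ associatedPrimes R M, (⨅ q ∈ associatedPrimes R M \ {p}, N q) ≠ ⊥) :
    ∀ i < t, D i =
      ⨅ p ∈ {p | p ∈ associatedPrimes R M ∧ mDim R ↥(D (i + 1)) ≤ ringKrullDim (R ⧸ p)}, N p := by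
  classical
  obtain ⟨hDt, hD0, hDlt, hDmax⟩ := hD
  haveI : IsNoetherian R M := isNoetherian_of_isNoetherianRing_of_finite R M
  haveI hfinNN : ∀ (K : Submodule R M), Module.Finite R ↥K := fun K =>
    Module.Finite.iff_fg.mpr (IsNoetherian.noetherian K)
  -- nilpotence of associated primes on the primary quotients
  have hAnnNil : ∀ p ∈ associatedPrimes R M, ∀ r ∈ p,
      r ∈ (Module.annihilator R (M ⧸ N p)).radical := by
    intro p hp r hr
    haveI : Module.Finite R (M ⧸ N p) :=
      Module.Finite.of_surjective (N p).mkQ (N p).mkQ_surjective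
    obtain ⟨k, hk⟩ := nilp_of_assoc_singleton (hprim p hp) hr
    exact Ideal.mem_radical_iff.mpr ⟨k, Module.mem_annihilator.mpr hk⟩
  -- Direction A : D i ≤ N p for every p in the relevant set
  have dirA : ∀ i, i < t → ∀ p, p ∈ associatedPrimes R M →
      mDim R ↥(D (i + 1)) ≤ ringKrullDim (R ⧸ p) → D i ≤ N p := by
    intro i hi p hp hdim
    by_contra hle
    set Q := Submodule.map (N p).mkQ (D i) with hQ
    have hQne : Q ≠ ⊥ := by
      intro h
      apply hle
      intro x hx
      have h1 : (N p).mkQ x ∈ Q := Submodule.mem_map_of_mem hx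
      rw [h] at h1
      exact (Submodule.Quotient.mk_eq_zero _).mp ((Submodule.mem_bot _).mp h1)
    haveI : Nontrivial ↥Q := Submodule.nontrivial_iff_ne_bot.mpr hQne
    obtain ⟨q, hq⟩ := associatedPrimes.nonempty R ↥Q
    have hq' : q ∈ associatedPrimes R (M ⧸ N p) :=
      associatedPrimes.subset_of_injective (Submodule.injective_subtype Q) hq
    rw [hprim p hp] at hq'
    have hqp : q = p := hq'
    have hann1 : Module.annihilator R ↥(D i) ≤ Module.annihilator R ↥Q := by
      intro r hr
      rw [Module.mem_annihilator] at hr ⊢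
      rintro ⟨y, hy⟩
      obtain ⟨x, hx, rfl⟩ := hy
      have hx0 : r • x = 0 := by
        have := hr ⟨x, hx⟩
        exact congrArg Subtype.val this
      have : r • ((N p).mkQ x) = 0 := by rw [← map_smul, hx0, map_zero]
      exact Subtype.ext this
    have hann2 : Module.annihilator R ↥Q ≤ p := by
      have h1 := hq.annihilator_le
      rw [Submodule.annihilator_top] at h1
      exact hqp ▸ h1
    haveI : p.IsPrime := hq'.symm ▸ hq.isPrime
    have hdimle : ringKrullDim (R ⧸ p) ≤ mDim R ↥(D i) :=
      dim_quot_le_of_ann_le (D i) (le_trans hann1 hann2)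
    have := lt_of_le_of_lt (le_trans hdim hdimle) (hDlt i hi)
    exact lt_irrefl _ this
  -- the dimension bound for the intersections
  have dimBound : ∀ i, i < t →
      mDim R ↥(⨅ p ∈ {p | p ∈ associatedPrimes R M ∧
          mDim R ↥(D (i + 1)) ≤ ringKrullDim (R ⧸ p)}, N p) < mDim R ↥(D (i + 1)) := by
    intro i hi
    set d := mDim R ↥(D (i + 1)) with hd
    set L := ⨅ p ∈ {p | p ∈ associatedPrimes R M ∧ d ≤ ringKrullDim (R ⧸ p)}, N p with hL
    have hbot : ⊥ < d := lt_of_le_of_lt bot_le (hDlt i hi)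
    have hTfin : {q | q ∈ associatedPrimes R M ∧ ringKrullDim (R ⧸ q) < d}.Finite :=
      (assoc_finite (R := R) (M := M)).subset (fun q hq => hq.1)
    set Tfin := hTfin.toFinset with hTfinD
    show Order.krullDim ↥(Module.support R ↥L) < d
    apply dim_lt_of_cover L Tfin hbot
    · intro q hq
      exact (hTfin.mem_toFinset.mp hq).2
    · intro pp hpp
      by_contra hcon
      push_neg at hcon
      have hchoice : ∀ q ∈ Tfin, ∃ r, r ∈ Module.annihilator R (M ⧸ N q) ∧ r ∉ pp.asIdeal := by
        intro q hq
        have hq' := hTfin.mem_toFinset.mp hq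
        by_contra hno
        push_neg at hno
        have hrad : (Module.annihilator R (M ⧸ N q)).radical ≤ pp.asIdeal :=
          (pp.isPrime.radical_le_iff).mpr hno
        exact hcon q hq (fun r hr => hrad (hAnnNil q hq'.1 r hr))
      choose! r hr1 hr2 using hchoice
      have hrrnot : (∏ q ∈ Tfin, r q) ∉ pp.asIdeal := by
        intro h
        obtain ⟨q, hq, hq'⟩ := (Ideal.IsPrime.prod_mem_iff (hp := pp.isPrime)).mp h
        exact hr2 q hq hq'
      apply hrrnot
      apply hpp
      rw [Submodule.mem_annihilator]
      intro x hx
      have hall : ∀ p ∈ associatedPrimes R M, (∏ q ∈ Tfin, r q) • x ∈ N p := by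
        intro p hp
        by_cases hcase : d ≤ ringKrullDim (R ⧸ p)
        · exact Submodule.smul_mem _ _ ((iInf₂_le (α := Submodule R M) p ⟨hp, hcase⟩ : L ≤ N p) hx)
        · have hpT : p ∈ Tfin := hTfin.mem_toFinset.mpr ⟨hp, not_le.mp hcase⟩
          have hrp : r p • x ∈ N p := by
            have h1 := Module.mem_annihilator.mp (hr1 p hpT) ((N p).mkQ x)
            rw [← map_smul] at h1
            exact (Submodule.Quotient.mk_eq_zero _).mp h1
          rw [← Finset.mul_prod_erase Tfin r hpT, mul_comm, mul_smul]
          exact Submodule.smul_mem _ _ hrp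
      have hmem : (∏ q ∈ Tfin, r q) • x ∈ ⨅ p ∈ associatedPrimes R M, N p :=
        Submodule.mem_iInf _ |>.mpr fun p => Submodule.mem_iInf _ |>.mpr fun hp => hall p hp
      rw [hint] at hmem
      exact (Submodule.mem_bot _).mp hmem
  -- Direction B : induction downwards
  have dirB : ∀ k i, i < t → t = i + 1 + k →
      (⨅ p ∈ {p | p ∈ associatedPrimes R M ∧
        mDim R ↥(D (i + 1)) ≤ ringKrullDim (R ⧸ p)}, N p) ≤ D i := by
    intro k
    induction k with
    | zero =>
      intro i hi hti
      refine hDmax i hi _ ?_ (dimBound i hi)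
      have : i + 1 = t := by omega
      rw [this, hDt]
      exact le_top
    | succ k ih =>
      intro i hi hti
      have hi1 : i + 1 < t := by omega
      have hsub : (⨅ p ∈ {p | p ∈ associatedPrimes R M ∧
            mDim R ↥(D (i + 1)) ≤ ringKrullDim (R ⧸ p)}, N p) ≤
          ⨅ p ∈ {p | p ∈ associatedPrimes R M ∧
            mDim R ↥(D (i + 1 + 1)) ≤ ringKrullDim (R ⧸ p)}, N p := by
        refine le_iInf₂ fun p hp => iInf₂_le p ?_
        exact ⟨hp.1, le_trans (le_of_lt (hDlt (i + 1) hi1)) hp.2⟩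
      refine hDmax i hi _ (le_trans hsub (le_trans (ih (i + 1) hi1 (by omega)) le_rfl))
        (dimBound i hi)
  intro i hi
  refine le_antisymm (le_iInf₂ fun p hp => dirA i hi p hp.1 hp.2) (dirB (t - (i + 1)) i hi (by omega))
end

section
/- Let R be a Noetherian local ring, M a finitely generated R-module of dimension d with dimension filtration D_0 ⊂ D_1 ⊂ … ⊂ D_t = M, d_i = dim D_i. Then there exists a system of parameters x_1, …, x_d of M such that (x_{d_i+1}, …, x_d)M ∩ D_i = 0 for all i = 0, 1, …, t-1 (a good system of parameters of M). -/
open IsLocalRing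

section AuxGSOP
open PrimeSpectrum

lemma isArtinian_of_pow_smul (R : Type*) [CommRing R] [IsLocalRing R] [IsNoetherianRing R]
    (n : ℕ) : ∀ (M : Type _) [AddCommGroup M] [Module R M] [Module.Finite R M],
    (∀ r ∈ (maximalIdeal R) ^ n, ∀ m : M, r • m = 0) → IsArtinian R M := by
  induction n with
  | zero =>
    intro M _ _ _ h
    have : Subsingleton M := by
      refine subsingleton_iff_forall_eq 0 |>.mpr fun m => ?_
      have := h 1 (by simp) m
      simpa using this
    have : Finite M := Finite.of_subsingleton
    infer_instance
  | succ n ih =>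
    intro M _ _ _ h
    set N : Submodule R M := (maximalIdeal R) • ⊤ with hN
    have hNart : IsArtinian R N := by
      haveI : Module.Finite R N := by
        haveI : IsNoetherian R M := isNoetherian_of_isNoetherianRing_of_finite R M
        exact Module.Finite.iff_fg.mpr (IsNoetherian.noetherian N)
      refine ih N ?_
      intro r hr m
      obtain ⟨m, hm⟩ := m
      have : r • m = 0 := by
        refine Submodule.smul_induction_on hm ?_ ?_
        · intro s hs x _
          rw [smul_smul]
          exact h (r * s) (by rw [pow_succ]; exact Ideal.mul_mem_mul hr hs) x
        · intro x y hx hy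
          rw [smul_add, hx, hy, add_zero]
      exact Subtype.ext this
    have hQart : IsArtinian R (M ⧸ N) := by
      have htor : Module.IsTorsionBySet R (M ⧸ N) ((maximalIdeal R) : Set R) := by
        intro m r
        obtain ⟨z, rfl⟩ := Submodule.Quotient.mk_surjective N m
        show (r : R) • Submodule.Quotient.mk z = 0
        rw [← Submodule.Quotient.mk_smul, Submodule.Quotient.mk_eq_zero]
        exact Submodule.smul_mem_smul r.2 trivial
      letI := htor.module
      haveI : IsScalarTower R (R ⧸ maximalIdeal R) (M ⧸ N) := htor.isScalarTower
      haveI : Module.Finite (R ⧸ maximalIdeal R) (M ⧸ N) :=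
        Module.Finite.of_restrictScalars_finite R _ _
      letI : Field (R ⧸ maximalIdeal R) := Ideal.Quotient.field _
      haveI hk : IsArtinian (R ⧸ maximalIdeal R) (M ⧸ N) := isArtinian_of_fg_of_artinian'
      rw [isArtinian_iff] at hk ⊢
      have key : ∀ p : Submodule R (M ⧸ N),
          ∃ q : Submodule (R ⧸ maximalIdeal R) (M ⧸ N), (q : Set (M ⧸ N)) = p := by
        intro p
        refine ⟨⟨p.toAddSubmonoid, ?_⟩, rfl⟩
        rintro c x hx
        obtain ⟨r, rfl⟩ := Ideal.Quotient.mk_surjective c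
        have hre : (Ideal.Quotient.mk (maximalIdeal R) r) • x = r • x := by
          rw [← algebraMap_smul (R := R) (R ⧸ maximalIdeal R) r x]; rfl
        show (Ideal.Quotient.mk (maximalIdeal R) r) • x ∈ p
        rw [hre]
        exact p.smul_mem r hx
      choose f hf using key
      have hmono : ∀ a b : Submodule R (M ⧸ N), a < b → f a < f b := by
        intro a b hab
        rw [SetLike.lt_iff_le_and_exists] at hab ⊢
        obtain ⟨hle, z, hz, hz'⟩ := hab
        refine ⟨fun w hw => ?_, z, ?_, ?_⟩
        · have hw' : w ∈ a := by rw [← SetLike.mem_coe, hf] at hw; exact hw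
          rw [← SetLike.mem_coe, hf]; exact hle hw'
        · rw [← SetLike.mem_coe, hf]; exact hz
        · rw [← SetLike.mem_coe, hf]; exact hz'
      exact Subrelation.wf (fun {a b} h => hmono a b h) (InvImage.wf f hk)
    exact isArtinian_of_range_eq_ker N.subtype N.mkQ
      (by rw [Submodule.ker_mkQ, Submodule.range_subtype])

lemma isFiniteLength_of_pow_smul (R : Type*) [CommRing R] [IsLocalRing R] [IsNoetherianRing R]
    (M : Type*) [AddCommGroup M] [Module R M] [Module.Finite R M]
    (n : ℕ) (h : ∀ r ∈ (maximalIdeal R) ^ n, ∀ m : M, r • m = 0) : IsFiniteLength R M := by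
  haveI : IsNoetherian R M := isNoetherian_of_isNoetherianRing_of_finite R M
  haveI := isArtinian_of_pow_smul R n M h
  exact isFiniteLength_iff_isNoetherian_isArtinian.mpr ⟨inferInstance, inferInstance⟩

lemma krullDim_le_nat_iff {α : Type*} [Preorder α] {c : ℕ} :
    Order.krullDim α ≤ (c : WithBot (WithTop ℕ)) ↔ ∀ p : LTSeries α, p.length ≤ c := by
  constructor
  · intro h p
    exact Nat.cast_le.mp ((Order.LTSeries.length_le_krullDim p).trans h)
  · intro h
    exact iSup_le fun p => by exact Nat.cast_le.mpr (h p)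

lemma inclusion_strictMono {α : Type*} [PartialOrder α] {s t : Set α} (h : s ⊆ t) :
    StrictMono (Set.inclusion h) := fun a b hab => hab

lemma avoid_step {R : Type*} [CommRing R] [IsNoetherianRing R] [IsLocalRing R]
    (I A : Ideal R) (c : ℕ)
    (hdim : Order.krullDim ↥(zeroLocus (I : Set R)) ≤ ((c+1 : ℕ) : WithBot (WithTop ℕ)))
    (hA : ∀ p : PrimeSpectrum R, p.asIdeal ∈ I.minimalPrimes →
      (∃ q : LTSeries ↥(zeroLocus (I : Set R)), q.length = c + 1 ∧ (q.head : PrimeSpectrum R) = p) →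
      ¬ A ≤ p.asIdeal) :
    ∃ ξ, ξ ∈ maximalIdeal R ∧ ξ ∈ A ∧
      Order.krullDim ↥(zeroLocus ((I ⊔ Ideal.span {ξ} : Ideal R) : Set R)) ≤ (c : WithBot (WithTop ℕ)) := by
  classical
  -- the bad primes
  set P : Set (PrimeSpectrum R) := {p | p.asIdeal ∈ I.minimalPrimes ∧
    ∃ q : LTSeries ↥(zeroLocus (I : Set R)), q.length = c + 1 ∧ (q.head : PrimeSpectrum R) = p}
    with hP
  have hPfin : P.Finite := by
    have h1 : (I.minimalPrimes).Finite := by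
      rw [Ideal.minimalPrimes_eq_comap]
      exact (minimalPrimes.finite_of_isNoetherianRing (R ⧸ I)).image _
    have : P ⊆ asIdeal ⁻¹' I.minimalPrimes := fun p hp => hp.1
    refine Set.Finite.subset (h1.preimage ?_) this
    intro a _ b _ hab
    exact PrimeSpectrum.ext hab
  -- no bad prime contains the closed point chain...
  have hnotle : ∀ p ∈ P, ¬ (maximalIdeal R * A ≤ p.asIdeal) := by
    rintro p ⟨hmin, q, hqlen, hqhead⟩ hle
    rcases (Ideal.IsPrime.mul_le hmin.1.1).mp hle with hm | ha
    · -- maximal ideal inside p : contradiction with a chain of length ≥ 1 above p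
      have h01 : q.head < q.last := by
        apply q.strictMono
        show (0 : Fin (q.length + 1)) < Fin.last _
        rw [Fin.lt_iff_val_lt_val]
        simp [hqlen]
      have hlast : (q.last : PrimeSpectrum R).asIdeal ≤ maximalIdeal R :=
        le_maximalIdeal (q.last : PrimeSpectrum R).2.ne_top
      have : (q.head : PrimeSpectrum R) < (q.last : PrimeSpectrum R) := h01
      rw [hqhead] at this
      have hlt : p.asIdeal < (q.last : PrimeSpectrum R).asIdeal := this
      exact absurd (lt_of_lt_of_le hlt (le_trans hlast hm)) (lt_irrefl _)
    · exact hA p hmin ⟨q, hqlen, hqhead⟩ ha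
  -- prime avoidance
  obtain ⟨ξ, hξmem, hξnot⟩ : ∃ ξ ∈ maximalIdeal R * A, ξ ∉ ⋃ p ∈ P, (p.asIdeal : Set R) := by
    by_contra hcon
    push_neg at hcon
    have hsub : ((maximalIdeal R * A : Ideal R) : Set R) ⊆
        ⋃ p ∈ (hPfin.toFinset : Set (PrimeSpectrum R)), (p.asIdeal : Set R) := by
      intro y hy
      have := hcon y hy
      simpa [Set.Finite.mem_toFinset] using (by simpa using this)
    rw [Ideal.subset_union_prime (closedPoint R) (closedPoint R)
      (fun p hp _ _ => (hPfin.mem_toFinset.mp hp).1.1.1)] at hsub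
    obtain ⟨p, hp, hle⟩ := hsub
    exact hnotle p (hPfin.mem_toFinset.mp hp) hle
  refine ⟨ξ, Ideal.mul_le_left hξmem, Ideal.mul_le_right hξmem, ?_⟩
  -- now prove the dimension bound
  rw [krullDim_le_nat_iff]
  intro q'
  by_contra hlen
  push_neg at hlen
  have hc1 : c + 1 ≤ q'.length := hlen
  have hsub : zeroLocus ((I ⊔ Ideal.span {ξ} : Ideal R) : Set R) ⊆ zeroLocus (I : Set R) :=
    zeroLocus_anti_mono (by exact_mod_cast le_sup_left)
  let Q : LTSeries ↥(zeroLocus (I : Set R)) := q'.map (Set.inclusion hsub) (inclusion_strictMono hsub)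
  have hQlen : Q.length = q'.length := rfl
  have hheadmem : I ≤ (q'.head : PrimeSpectrum R).asIdeal := by
    have := (q'.head).2
    rw [mem_zeroLocus] at this
    exact le_trans le_sup_left (by exact_mod_cast this)
  have hξhead : ξ ∈ (q'.head : PrimeSpectrum R).asIdeal := by
    have := (q'.head).2
    rw [mem_zeroLocus] at this
    refine this ?_
    show ξ ∈ (I ⊔ Ideal.span {ξ} : Ideal R)
    exact Ideal.mem_sup_right (Ideal.subset_span (Set.mem_singleton ξ))
  obtain ⟨p, hpmin, hple⟩ := Ideal.exists_minimalPrimes_le (J := (q'.head : PrimeSpectrum R).asIdeal) hheadmem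
  have hpprime : p.IsPrime := hpmin.1.1
  have hdim' := krullDim_le_nat_iff.mp hdim
  rcases eq_or_lt_of_le hple with heq | hlt
  · -- the head is a minimal prime, hence in P, hence ξ ∉ head : contradiction
    have hQl : Q.length = c + 1 := le_antisymm (hdim' Q) (hc1.trans hQlen.ge)
    have hheadP : (q'.head : PrimeSpectrum R) ∈ P := by
      refine ⟨heq ▸ hpmin, Q, hQl, ?_⟩
      show ((Set.inclusion hsub q'.head : ↥(zeroLocus (I : Set R))) : PrimeSpectrum R) = _
      rfl
    exact hξnot (Set.mem_biUnion hheadP hξhead)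
  · -- prepend p : chain too long
    have hpz : (⟨p, hpprime⟩ : PrimeSpectrum R) ∈ zeroLocus (I : Set R) := by
      rw [mem_zeroLocus]; exact_mod_cast hpmin.1.2
    have hrel : (⟨⟨p, hpprime⟩, hpz⟩ : ↥(zeroLocus (I : Set R))) < Q.head := by
      show (⟨p, hpprime⟩ : PrimeSpectrum R) < (Q.head : PrimeSpectrum R)
      exact hlt
    have := hdim' (Q.cons _ hrel)
    simp only [RelSeries.cons_length ] at this
    omega

lemma artinRees_le {R : Type*} {M : Type*} [CommRing R] [IsNoetherianRing R]
    [AddCommGroup M] [Module R M] [Module.Finite R M] (q : Ideal R) (N : Submodule R M) :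
    ∃ k : ℕ, ∀ n ≥ k, q ^ n • (⊤ : Submodule R M) ⊓ N ≤
      q ^ (n - k) • (q ^ k • (⊤ : Submodule R M) ⊓ N) := by
  obtain ⟨m, f, hf⟩ := Module.Finite.exists_fin' R M
  obtain ⟨k, hk⟩ := Ideal.exists_pow_inf_eq_pow_smul q (N.comap f)
  refine ⟨k, fun n hn a ha => ?_⟩
  obtain ⟨ha1, ha2⟩ := Submodule.mem_inf.mp ha
  have hmaptop : ∀ l : ℕ, (q ^ l • (⊤ : Submodule R (Fin m → R))).map f
      = q ^ l • (⊤ : Submodule R M) := by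
    intro l
    rw [Submodule.map_smul'', Submodule.map_top, LinearMap.range_eq_top.mpr hf]
  obtain ⟨b, hb, hba⟩ : ∃ b ∈ q ^ n • (⊤ : Submodule R (Fin m → R)), f b = a := by
    have : a ∈ (q ^ n • (⊤ : Submodule R (Fin m → R))).map f := by rw [hmaptop]; exact ha1
    exact this
  have hbN : b ∈ N.comap f := by simp only [Submodule.mem_comap, hba]; exact ha2
  have hbmem : b ∈ q ^ (n - k) • (q ^ k • (⊤ : Submodule R (Fin m → R)) ⊓ N.comap f) := by
    rw [← hk n hn]
    exact Submodule.mem_inf.mpr ⟨hb, hbN⟩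
  have : a ∈ (q ^ (n - k) • (q ^ k • (⊤ : Submodule R (Fin m → R)) ⊓ N.comap f)).map f := by
    exact ⟨b, hbmem, hba⟩
  rw [Submodule.map_smul''] at this
  refine Submodule.smul_mono le_rfl ?_ this
  refine le_trans (Submodule.map_inf_le f) ?_
  exact inf_le_inf (le_of_eq (hmaptop k)) (Submodule.map_comap_le f N)

lemma nat_le_krullDim_of_series {α : Type*} [Preorder α] (p : LTSeries α) {c : ℕ}
    (hc : c ≤ p.length) : (c : WithBot (WithTop ℕ)) ≤ Order.krullDim α :=
  le_trans (Nat.cast_le.mpr hc) (Order.LTSeries.length_le_krullDim p)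

end AuxGSOP

/-- existence of a good system of parameters with respect to the
dimension filtration. -/
theorem stmt6 {R M : Type*} [CommRing R] [IsNoetherianRing R] [IsLocalRing R]
    [AddCommGroup M] [Module R M] [Module.Finite R M]
    (d : ℕ) (hd : mDim R M = (d : WithBot (WithTop ℕ)))
    (t : ℕ) (D : ℕ → Submodule R M) (hD : IsDimFiltration R M t D) :
    ∃ x : Fin d → R, IsGoodSOP R M t D d x := by
  classical
  open PrimeSpectrum in
  haveI : IsNoetherian R M := isNoetherian_of_isNoetherianRing_of_finite R M
  haveI hDfin : ∀ i, Module.Finite R ↥(D i) :=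
    fun i => Module.Finite.iff_fg.mpr (IsNoetherian.noetherian (D i))
  set I0 : Ideal R := Module.annihilator R M with hI0
  have hd'' : Order.krullDim ↥(PrimeSpectrum.zeroLocus (I0 : Set R)) = (d : WithBot (WithTop ℕ)) := by
    have hsupp : Module.support R M = PrimeSpectrum.zeroLocus (I0 : Set R) :=
      Module.support_eq_zeroLocus
    unfold mDim at hd
    rw [← hsupp]
    exact hd
  -- annihilators of the filtration
  set AD : ℕ → Ideal R := fun i => Module.annihilator R ↥(D i) with hAD
  have hADkill : ∀ i, ∀ r ∈ AD i, ∀ a ∈ D i, r • a = 0 := by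
    intro i r hr a ha
    have := Module.mem_annihilator.mp hr ⟨a, ha⟩
    simpa using Subtype.ext_iff.mp this
  have hADdim : ∀ i, mDim R ↥(D i) =
      Order.krullDim ↥(PrimeSpectrum.zeroLocus ((AD i : Ideal R) : Set R)) := by
    intro i
    unfold mDim
    rw [Module.support_eq_zeroLocus]
  set A : ℕ → Ideal R := fun c => (Finset.range t).inf
    (fun i => if mDim R ↥(D i) ≤ (c : WithBot (WithTop ℕ)) then AD i else ⊤) with hA
  have hA1 : ∀ c : ℕ, ∀ i < t, mDim R ↥(D i) ≤ (c : WithBot (WithTop ℕ)) → A c ≤ AD i := by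
    intro c i hi hdim
    refine le_trans (Finset.inf_le (Finset.mem_range.mpr hi)) ?_
    rw [if_pos hdim]
  have hA2 : ∀ (c : ℕ) (p : Ideal R), p.IsPrime → A c ≤ p →
      ∃ i, i < t ∧ mDim R ↥(D i) ≤ (c : WithBot (WithTop ℕ)) ∧ AD i ≤ p := by
    intro c p hp hle
    obtain ⟨i, hi, hile⟩ := (Ideal.IsPrime.inf_le' hp).mp hle
    by_cases hcond : mDim R ↥(D i) ≤ (c : WithBot (WithTop ℕ))
    · exact ⟨i, Finset.mem_range.mp hi, hcond, by rwa [if_pos hcond] at hile⟩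
    · rw [if_neg hcond] at hile
      exact absurd (top_le_iff.mp hile) hp.ne_top
  -- main downward induction
  have main : ∀ k : ℕ, k ≤ d → ∃ x : Fin d → R,
      (∀ j, x j ∈ maximalIdeal R) ∧ (∀ j, x j ∈ A j.val) ∧
      Order.krullDim ↥(PrimeSpectrum.zeroLocus
        ((I0 ⊔ Ideal.span (x '' {j : Fin d | d - k ≤ j.val}) : Ideal R) : Set R))
        ≤ ((d - k : ℕ) : WithBot (WithTop ℕ)) := by
    intro k
    induction k with
    | zero =>
      intro _
      refine ⟨fun _ => 0, fun _ => Submodule.zero_mem _, fun _ => Submodule.zero_mem _, ?_⟩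
      have hempty : {j : Fin d | d - 0 ≤ j.val} = (∅ : Set (Fin d)) := by
        ext j
        simp only [Set.mem_setOf_eq, Set.mem_empty_iff_false, iff_false, Nat.sub_zero, not_le]
        exact j.2
      have h2 : (I0 ⊔ Ideal.span ((fun _ : Fin d => (0:R)) '' {j : Fin d | d - 0 ≤ j.val}))
          = I0 := by
        rw [hempty]
        simp
      rw [h2, Nat.sub_zero]
      exact le_of_eq hd''
    | succ k ih =>
      intro hk1
      obtain ⟨x, hxm, hxA, hxdim⟩ := ih (Nat.le_of_succ_le hk1)
      set c := d - (k+1) with hc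
      have hdk : d - k = c + 1 := by omega
      rw [hdk] at hxdim
      set I : Ideal R := I0 ⊔ Ideal.span (x '' {j : Fin d | c + 1 ≤ j.val}) with hI
      have hAcond : ∀ p : PrimeSpectrum R, p.asIdeal ∈ I.minimalPrimes →
          (∃ q : LTSeries ↥(PrimeSpectrum.zeroLocus (I : Set R)), q.length = c + 1 ∧
            (q.head : PrimeSpectrum R) = p) → ¬ A c ≤ p.asIdeal := by
        rintro p hpmin ⟨q, hqlen, hqhead⟩ hle
        obtain ⟨i, hit, hidim, hiann⟩ := hA2 c p.asIdeal hpmin.1.1 hle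
        have hmem : ∀ l : Fin (q.length + 1),
            ((q l : ↥(PrimeSpectrum.zeroLocus (I : Set R))) : PrimeSpectrum R) ∈
              PrimeSpectrum.zeroLocus ((AD i : Ideal R) : Set R) := by
          intro l
          rw [PrimeSpectrum.mem_zeroLocus]
          have hhead : q.head ≤ q l := q.monotone (Fin.zero_le l)
          have hhead' : (q.head : PrimeSpectrum R).asIdeal ≤ (q l : PrimeSpectrum R).asIdeal :=
            hhead
          intro z hz
          exact (le_trans hiann (hqhead ▸ hhead')) hz
        let Q : LTSeries ↥(PrimeSpectrum.zeroLocus ((AD i : Ideal R) : Set R)) :=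
          ⟨q.length, fun l => ⟨(q l : PrimeSpectrum R), hmem l⟩, fun l => q.step l⟩
        have hge : ((c+1 : ℕ) : WithBot (WithTop ℕ)) ≤
            Order.krullDim ↥(PrimeSpectrum.zeroLocus ((AD i : Ideal R) : Set R)) :=
          nat_le_krullDim_of_series Q (by rw [show Q.length = q.length from rfl, hqlen])
        rw [← hADdim i] at hge
        have hcontra := le_trans hge hidim
        have : (c+1 : ℕ) ≤ c := by exact_mod_cast hcontra
        omega
      obtain ⟨ξ, hξm, hξA, hξdim⟩ := avoid_step I (A c) c hxdim hAcond
      have hcd : c < d := by omega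
      refine ⟨Function.update x ⟨c, hcd⟩ ξ, ?_, ?_, ?_⟩
      · intro j
        by_cases hj : j = ⟨c, hcd⟩
        · rw [hj, Function.update_self]; exact hξm
        · rw [Function.update_of_ne hj]; exact hxm j
      · intro j
        by_cases hj : j = ⟨c, hcd⟩
        · subst hj; rw [Function.update_self]; exact hξA
        · rw [Function.update_of_ne hj]; exact hxA j
      · have himg : Function.update x ⟨c, hcd⟩ ξ '' {j : Fin d | d - (k+1) ≤ j.val}
            = insert ξ (x '' {j : Fin d | c + 1 ≤ j.val}) := by
          rw [← hc]
          ext r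
          constructor
          · rintro ⟨j, hj, rfl⟩
            by_cases hjc : j = ⟨c, hcd⟩
            · rw [hjc, Function.update_self]; exact Set.mem_insert _ _
            · rw [Function.update_of_ne hjc]
              refine Set.mem_insert_of_mem _ ⟨j, ?_, rfl⟩
              have hne : j.val ≠ c := fun h => hjc (Fin.ext h)
              simp only [Set.mem_setOf_eq] at hj ⊢
              omega
          · rintro (rfl | ⟨j, hj, rfl⟩)
            · exact ⟨⟨c, hcd⟩, by simp, Function.update_self _ _ _⟩
            · have hjc : j ≠ ⟨c, hcd⟩ := by
                intro h
                rw [h] at hj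
                simp only [Set.mem_setOf_eq] at hj
                omega
              refine ⟨j, ?_, Function.update_of_ne hjc _ _⟩
              simp only [Set.mem_setOf_eq] at hj ⊢
              omega
        rw [himg, Ideal.span_insert, sup_comm (Ideal.span {ξ}) _, ← sup_assoc]
        exact hξdim
  -- extract the distinguished s.o.p.
  obtain ⟨x, hxm, hxA, hxdim0⟩ := main d le_rfl
  have huniv : {j : Fin d | d - d ≤ j.val} = (Set.univ : Set (Fin d)) := by
    ext j; simp
  rw [huniv, Set.image_univ] at hxdim0
  have hdd : ((d - d : ℕ) : WithBot (WithTop ℕ)) = ((0 : ℕ) : WithBot (WithTop ℕ)) := by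
    norm_num
  rw [hdd] at hxdim0
  set K : Ideal R := I0 ⊔ Ideal.span (Set.range x) with hK
  -- M is nontrivial
  have hI0ne : I0 ≠ ⊤ := by
    intro htop
    have h1 : (1 : R) ∈ Module.annihilator R M := by
      rw [hI0] at htop
      rw [htop]
      exact Submodule.mem_top
    have hsub : Subsingleton M := by
      refine subsingleton_iff_forall_eq 0 |>.mpr fun m => ?_
      have := Module.mem_annihilator.mp h1 m
      simpa using this
    have hempty : Module.support R M = ∅ := Module.support_eq_empty
    unfold mDim at hd
    rw [hempty] at hd
    have : IsEmpty ↥(∅ : Set (PrimeSpectrum R)) := by simp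
    rw [Order.krullDim_eq_bot] at hd
    exact WithBot.bot_ne_coe hd
  have hKm : K ≤ maximalIdeal R := by
    refine sup_le (le_maximalIdeal hI0ne) (Ideal.span_le.mpr ?_)
    rintro z ⟨j, rfl⟩
    exact hxm j
  have hrad : K.radical = maximalIdeal R := by
    rw [Ideal.radical_eq_sInf]
    have hset : {J : Ideal R | K ≤ J ∧ J.IsPrime} = {maximalIdeal R} := by
      ext J
      constructor
      · rintro ⟨hKJ, hJp⟩
        simp only [Set.mem_singleton_iff]
        by_contra hne
        have hJm : J ≤ maximalIdeal R := le_maximalIdeal hJp.ne_top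
        have hJlt : J < maximalIdeal R := lt_of_le_of_ne hJm hne
        have hm : (⟨maximalIdeal R, (maximalIdeal.isMaximal R).isPrime⟩ : PrimeSpectrum R) ∈
            PrimeSpectrum.zeroLocus (K : Set R) := (PrimeSpectrum.mem_zeroLocus _ _).mpr hKm
        have hJz : (⟨J, hJp⟩ : PrimeSpectrum R) ∈ PrimeSpectrum.zeroLocus (K : Set R) :=
          (PrimeSpectrum.mem_zeroLocus _ _).mpr hKJ
        have hltPS : (⟨⟨J, hJp⟩, hJz⟩ : ↥(PrimeSpectrum.zeroLocus (K : Set R))) <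
            ⟨⟨maximalIdeal R, (maximalIdeal.isMaximal R).isPrime⟩, hm⟩ := by
          show (⟨J, hJp⟩ : PrimeSpectrum R) < ⟨maximalIdeal R, (maximalIdeal.isMaximal R).isPrime⟩
          exact hJlt
        have := krullDim_le_nat_iff.mp hxdim0
          (RelSeries.cons (RelSeries.singleton _ _) _ hltPS)
        exact Nat.not_succ_le_zero _ this
      · rintro rfl
        exact ⟨hKm, (maximalIdeal.isMaximal R).isPrime⟩
    rw [hset, sInf_singleton]
  obtain ⟨n, hn⟩ := Ideal.exists_radical_pow_le_of_fg K (IsNoetherian.noetherian _)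
  rw [hrad] at hn
  -- Artin-Rees preparation
  set qI : ℕ → Ideal R := fun i =>
    Ideal.span (x '' {j : Fin d | mDim R ↥(D i) ≤ (j.val : WithBot (WithTop ℕ))}) with hqI
  have hqle : ∀ i < t, qI i ≤ AD i := by
    intro i hit
    refine Ideal.span_le.mpr ?_
    rintro z ⟨j, hj, rfl⟩
    exact hA1 j.val i hit hj (hxA j)
  have hAR := fun i : ℕ => artinRees_le (qI i) (D i)
  choose kk hkk using hAR
  set e := (Finset.range t).sup kk + 1 with he
  refine ⟨fun j => x j ^ e, ⟨hd, fun j => ?_, ?_⟩, ?_⟩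
  · -- powers in the maximal ideal
    show x j ^ e ∈ maximalIdeal R
    have : x j ^ e = x j ^ ((Finset.range t).sup kk) * x j := by rw [← pow_succ]
    rw [this]
    exact Ideal.mul_mem_left _ _ (hxm j)
  · -- finite length of the quotient
    set y : Fin d → R := fun j => x j ^ e with hy
    have hyK : maximalIdeal R ≤ (I0 ⊔ Ideal.span (Set.range y)).radical := by
      have hKrad : K ≤ (I0 ⊔ Ideal.span (Set.range y)).radical := by
        refine sup_le (le_trans le_sup_left Ideal.le_radical) (Ideal.span_le.mpr ?_)
        rintro z ⟨j, rfl⟩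
        exact Ideal.mem_radical_iff.mpr ⟨e, Submodule.mem_sup_right (Ideal.subset_span ⟨j, rfl⟩)⟩
      calc maximalIdeal R = K.radical := hrad.symm
        _ ≤ ((I0 ⊔ Ideal.span (Set.range y)).radical).radical := Ideal.radical_mono hKrad
        _ = (I0 ⊔ Ideal.span (Set.range y)).radical := Ideal.radical_idem _
    have hrady : (I0 ⊔ Ideal.span (Set.range y)).radical = maximalIdeal R := by
      refine le_antisymm ?_ hyK
      have hle : I0 ⊔ Ideal.span (Set.range y) ≤ maximalIdeal R := by
        refine sup_le (le_maximalIdeal hI0ne) (Ideal.span_le.mpr ?_)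
        rintro z ⟨j, rfl⟩
        show x j ^ e ∈ maximalIdeal R
        have : x j ^ e = x j ^ ((Finset.range t).sup kk) * x j := by rw [← pow_succ]
        rw [this]
        exact Ideal.mul_mem_left _ _ (hxm j)
      calc (I0 ⊔ Ideal.span (Set.range y)).radical ≤ (maximalIdeal R).radical :=
            Ideal.radical_mono hle
        _ = maximalIdeal R := ((maximalIdeal.isMaximal R).isPrime).radical
    obtain ⟨n', hn'⟩ := Ideal.exists_radical_pow_le_of_fg (I0 ⊔ Ideal.span (Set.range y))
      (IsNoetherian.noetherian _)
    rw [hrady] at hn'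
    refine isFiniteLength_of_pow_smul R _ n' ?_
    intro r hr z
    obtain ⟨w, rfl⟩ := Submodule.Quotient.mk_surjective _ z
    obtain ⟨a, ha, s, hs, rfl⟩ := Submodule.mem_sup.mp (hn' hr)
    have haw : a • w = 0 := Module.mem_annihilator.mp ha w
    have : (a + s) • w = s • w := by rw [add_smul, haw, zero_add]
    rw [← Submodule.Quotient.mk_smul, this]
    rw [Submodule.Quotient.mk_eq_zero]
    exact Submodule.smul_mem_smul hs Submodule.mem_top
  · -- the good intersection property
    intro i hit
    rw [eq_bot_iff]
    have h1 : Ideal.span ((fun j => x j ^ e) '' {j : Fin d | mDim R ↥(D i) ≤ (j.val : WithBot (WithTop ℕ))})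
        ≤ (qI i) ^ e := by
      refine Ideal.span_le.mpr ?_
      rintro z ⟨j, hj, rfl⟩
      refine Ideal.pow_mem_pow (Ideal.subset_span ?_) e
      exact ⟨j, hj, rfl⟩
    have hei1 : kk i + 1 ≤ e := by
      rw [he]
      exact Nat.succ_le_succ (Finset.le_sup (f := kk) (Finset.mem_range.mpr hit))
    have hAReq := hkk i e (by omega)
    calc Ideal.span ((fun j => x j ^ e) '' {j : Fin d | mDim R ↥(D i) ≤ (j.val : WithBot (WithTop ℕ))})
          • (⊤ : Submodule R M) ⊓ D i
        ≤ (qI i) ^ e • (⊤ : Submodule R M) ⊓ D i :=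
          inf_le_inf (Submodule.smul_mono h1 le_rfl) le_rfl
      _ ≤ (qI i) ^ (e - kk i) • ((qI i) ^ (kk i) • (⊤ : Submodule R M) ⊓ D i) := hAReq
      _ ≤ (qI i) • D i := Submodule.smul_mono (Ideal.pow_le_self (by omega)) inf_le_right
      _ ≤ ⊥ := Submodule.smul_le.mpr fun r hr a ha =>
          (Submodule.mem_bot R).mpr (hADkill i r (hqle i hit hr) a ha)
end

section
/- Let R be a Noetherian local ring, M a finitely generated R-module of dimension d, and F: M_0 ⊂ M_1 ⊂ … ⊂ M_t = M a filtration of submodules with dim M_0 < dim M_1 < … < dim M_t = d. If x_1, …, x_d is a good system of parameters of M with respect to F (i.e., M_i ∩ (x_{d_i+1}, …, x_d)M = 0 where d_i = dim M_i), then x_1, …, x_{d_i} is a system of parameters of M_i for each i ≥ 1. -/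
open IsLocalRing

lemma aux_ann_quot_smul_le {R : Type*} {P : Type*} [CommRing R] [AddCommGroup P] [Module R P]
    [Module.Finite R P] (J p : Ideal R) (hp : p.IsPrime)
    (hJ : J ≤ p) (hann : Module.annihilator R P ≤ p) :
    Module.annihilator R (P ⧸ (J • ⊤ : Submodule R P)) ≤ p := by
  intro s hs
  by_contra hsp
  have hsm : ∀ m : P, s • m ∈ (J • ⊤ : Submodule R P) := fun m => by
    have h0 : (s • (Submodule.Quotient.mk m) : P ⧸ (J • ⊤ : Submodule R P)) = 0 :=
      Module.mem_annihilator.mp hs _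
    rwa [← Submodule.Quotient.mk_smul, Submodule.Quotient.mk_eq_zero] at h0
  set f : Module.End R P := algebraMap R (Module.End R P) s with hf
  have hrange : LinearMap.range f ≤ (J • ⊤ : Submodule R P) := by
    rintro _ ⟨m, rfl⟩
    simpa [f, Module.algebraMap_end_apply] using hsm m
  obtain ⟨q, hq_monic, _, hq_coeff, hq_eval⟩ :=
    LinearMap.exists_monic_and_coeff_mem_pow_and_aeval_eq_zero_of_range_le_smul R f J hrange
  have heval : Polynomial.aeval f q = algebraMap R (Module.End R P) (q.eval s) := by
    rw [hf, Polynomial.aeval_algebraMap_apply]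
    congr 1
  have hann' : q.eval s ∈ Module.annihilator R P := by
    rw [Module.mem_annihilator]
    intro m
    have h2 : (algebraMap R (Module.End R P) (q.eval s)) m = (0 : Module.End R P) m := by
      rw [← heval, hq_eval]
    simpa [Module.algebraMap_end_apply] using h2
  have hrp : q.eval s ∈ p := hann hann'
  have hsum : q.eval s
      = (∑ k ∈ Finset.range q.natDegree, q.coeff k * s ^ k) + s ^ q.natDegree := by
    rw [Polynomial.eval_eq_sum_range, Finset.sum_range_succ, hq_monic.coeff_natDegree, one_mul]
  have hsum_mem : (∑ k ∈ Finset.range q.natDegree, q.coeff k * s ^ k) ∈ p := by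
    refine Ideal.sum_mem _ fun k hk => Ideal.mul_mem_right _ _ ?_
    exact hJ (Ideal.pow_le_self (Nat.sub_ne_zero_of_lt (Finset.mem_range.mp hk)) (hq_coeff k))
  have hpow : s ^ q.natDegree ∈ p := by
    have h3 := hrp
    rw [hsum] at h3
    simpa using Ideal.sub_mem p h3 hsum_mem
  exact hsp (hp.mem_of_pow_mem _ hpow)


lemma aux_max_le_of_finiteLength {R T : Type*} [CommRing R] [IsLocalRing R]
    [AddCommGroup T] [Module R T] [Module.Finite R T] (hT : IsFiniteLength R T)
    (p : Ideal R) (hp : p.IsPrime) (hann : Module.annihilator R T ≤ p) :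
    maximalIdeal R ≤ p := by
  have hart : IsArtinian R T := (isFiniteLength_iff_isNoetherian_isArtinian.mp hT).2
  obtain ⟨n, t, ht⟩ := Module.Finite.exists_fin (R := R) (M := T)
  let g : R →ₗ[R] (Fin n → T) := LinearMap.pi fun i => LinearMap.toSpanSingleton R T (t i)
  have hker : LinearMap.ker g = Module.annihilator R T := by
    ext r
    simp only [LinearMap.mem_ker, Module.mem_annihilator]
    constructor
    · intro h m
      have hm : m ∈ Submodule.span R (Set.range t) := ht ▸ Submodule.mem_top
      induction hm using Submodule.span_induction with
      | mem y hy =>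
        obtain ⟨i, rfl⟩ := hy
        exact congrFun h i
      | zero => simp
      | add y z _ _ hy hz => rw [smul_add, hy, hz, add_zero]
      | smul a y _ hy => rw [smul_comm, hy, smul_zero]
    · intro h
      ext i
      exact h (t i)
  have hinj : Function.Injective ((LinearMap.ker g).liftQ g le_rfl) := by
    rw [← LinearMap.ker_eq_bot, Submodule.ker_liftQ_eq_bot _ _ _ le_rfl]
  haveI hart2 : IsArtinian R (R ⧸ Module.annihilator R T) := by
    rw [← hker]
    exact isArtinian_of_injective _ hinj
  haveI hartring : IsArtinianRing (R ⧸ Module.annihilator R T) :=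
    isArtinian_of_tower R hart2
  set mk := Ideal.Quotient.mk (Module.annihilator R T) with hmk
  have hsurj : Function.Surjective mk := Ideal.Quotient.mk_surjective
  haveI hpm : (p.map mk).IsPrime :=
    Ideal.map_isPrime_of_surjective hsurj (by rwa [Ideal.mk_ker])
  haveI hpmax : (p.map mk).IsMaximal := IsArtinianRing.isMaximal_of_isPrime _
  have hcomax : ((p.map mk).comap mk).IsMaximal := Ideal.comap_isMaximal_of_surjective mk hsurj
  have hpeq : (p.map mk).comap mk = p := by
    rw [Ideal.comap_map_of_surjective mk hsurj]
    rw [← RingHom.ker_eq_comap_bot, Ideal.mk_ker]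
    exact sup_eq_left.mpr hann
  rw [hpeq] at hcomax
  exact le_of_eq (eq_maximalIdeal hcomax).symm


universe u v

lemma aux_artinian_restrict {R S M : Type*} [CommRing R] [CommRing S] [Algebra R S]
    [AddCommGroup M] [Module S M] [Module R M] [IsScalarTower R S M]
    (hsurj : Function.Surjective (algebraMap R S)) (h : IsArtinian S M) : IsArtinian R M := by
  let g : Submodule R M → Submodule S M := fun W =>
    { carrier := W
      add_mem' := fun ha hb => W.add_mem ha hb
      zero_mem' := W.zero_mem
      smul_mem' := by
        intro s m hm
        obtain ⟨r, rfl⟩ := hsurj s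
        rw [algebraMap_smul]
        exact W.smul_mem r hm }
  have hg : StrictMono g := fun A B hAB => by
    constructor
    · exact fun a ha => hAB.1 ha
    · intro hBA
      exact hAB.2 fun b hb => hBA hb
  exact hg.wellFoundedLT

lemma aux_artinian_of_pow {R : Type u} [CommRing R] [IsLocalRing R] [IsNoetherianRing R] :
    ∀ (n : ℕ) {Q : Type v} [AddCommGroup Q] [Module R Q] [Module.Finite R Q],
      (maximalIdeal R) ^ n ≤ Module.annihilator R Q → IsArtinian R Q := by
  intro n
  induction n with
  | zero =>
    intro Q _ _ _ h
    have h1 : (1 : R) ∈ Module.annihilator R Q := h (by simp)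
    have : Subsingleton Q := by
      refine ⟨fun a b => ?_⟩
      have ha := Module.mem_annihilator.mp h1 a
      have hb := Module.mem_annihilator.mp h1 b
      rw [one_smul] at ha hb
      rw [ha, hb]
    haveI : Finite Q := Finite.of_subsingleton
    exact isArtinian_of_finite
  | succ n ih =>
    intro Q _ _ _ h
    haveI : IsNoetherian R Q := isNoetherian_of_isNoetherianRing_of_finite R Q
    set N : Submodule R Q := maximalIdeal R • ⊤ with hNdef
    haveI : Module.Finite R N := Module.Finite.iff_fg.mpr (IsNoetherian.noetherian N)
    have hN : (maximalIdeal R) ^ n ≤ Module.annihilator R ↥N := by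
      intro r hr
      rw [Module.mem_annihilator]
      rintro ⟨y, hy⟩
      have hry : r • y = 0 := by
        refine Submodule.smul_induction_on hy (fun a ha z _ => ?_) (fun u v hu hv => ?_)
        · rw [smul_comm, ← smul_assoc, smul_eq_mul]
          have hmem : a * r ∈ (maximalIdeal R) ^ (n + 1) := by
            rw [pow_succ']
            exact Ideal.mul_mem_mul ha hr
          rw [Module.mem_annihilator.mp (h hmem) z]
        · rw [smul_add, hu, hv, add_zero]
      exact Subtype.ext (by simpa using hry)
    haveI hart1 : IsArtinian R N := ih hN
    haveI : IsArtinian R (Q ⧸ N) := by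
      have htor : Module.IsTorsionBySet R (Q ⧸ N) (maximalIdeal R) :=
        Module.isTorsionBySet_quotient_ideal_smul Q (maximalIdeal R)
      letI : Module (R ⧸ maximalIdeal R) (Q ⧸ N) := htor.module
      haveI : IsScalarTower R (R ⧸ maximalIdeal R) (Q ⧸ N) := htor.isScalarTower
      haveI : Module.Finite R (Q ⧸ N) := Module.Finite.quotient R N
      haveI : Module.Finite (R ⧸ maximalIdeal R) (Q ⧸ N) :=
        Module.Finite.of_restrictScalars_finite R _ _
      letI : Field (R ⧸ maximalIdeal R) := Ideal.Quotient.field (maximalIdeal R)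
      haveI : IsArtinianRing (R ⧸ maximalIdeal R) := inferInstance
      haveI hart3 : IsArtinian (R ⧸ maximalIdeal R) (Q ⧸ N) := inferInstance
      exact aux_artinian_restrict Ideal.Quotient.mk_surjective hart3
    exact isArtinian_of_range_eq_ker N.subtype N.mkQ
      (by rw [Submodule.ker_mkQ, Submodule.range_subtype])

lemma aux_finiteLength_of_max_le_radical {R : Type u} {Q : Type v} [CommRing R]
    [IsNoetherianRing R] [IsLocalRing R] [AddCommGroup Q] [Module R Q] [Module.Finite R Q]
    (h : maximalIdeal R ≤ (Module.annihilator R Q).radical) : IsFiniteLength R Q := by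
  rw [isFiniteLength_iff_isNoetherian_isArtinian]
  refine ⟨isNoetherian_of_isNoetherianRing_of_finite R Q, ?_⟩
  obtain ⟨n, hn⟩ := Ideal.exists_pow_le_of_le_radical_of_fg h (IsNoetherian.noetherian _)
  exact aux_artinian_of_pow n hn

/-- if `x` is a good system of parameters of `M` with respect to a filtration `F`
satisfying the dimension condition, then the first `dim (F i)` elements of `x` form a system of
parameters of `F i` for each `i ≥ 1`. -/
theorem stmt7 {R M : Type*} [CommRing R] [IsNoetherianRing R] [IsLocalRing R]
    [AddCommGroup M] [Module R M] [Module.Finite R M]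
    (t : ℕ) (F : ℕ → Submodule R M) (hF : DimCond R M t F)
    (dI : ℕ → ℕ) (hdI : ∀ i, 1 ≤ i → i ≤ t → mDim R ↥(F i) = (dI i : WithBot (WithTop ℕ)))
    (d : ℕ) (x : Fin d → R) (hx : IsGoodSOP R M t F d x) :
    ∀ i, 1 ≤ i → i ≤ t →
      IsFiniteLength R
        (↥(F i) ⧸ (Ideal.span (x '' {j | (j : ℕ) < dI i}) • (⊤ : Submodule R ↥(F i)))) := by
  
  obtain ⟨⟨hdim, hmem, hfl⟩, hgood⟩ := hx
  intro i hi1 hit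
  haveI : IsNoetherian R M := isNoetherian_of_isNoetherianRing_of_finite R M
  haveI : Module.Finite R ↥(F i) := Module.Finite.iff_fg.mpr (IsNoetherian.noetherian (F i))
  set J : Ideal R := Ideal.span (x '' {j : Fin d | (j : ℕ) < dI i}) with hJdef
  set J' : Ideal R := Ideal.span (x '' {j : Fin d | dI i ≤ (j : ℕ)}) with hJ'def
  have hdIi := hdI i hi1 hit
  have hcast : ∀ a b : ℕ, ((a : WithBot (WithTop ℕ)) ≤ (b : WithBot (WithTop ℕ))) ↔ a ≤ b := by
    exact_mod_cast fun a b => Iff.rfl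
  have hsetJ' : {j : Fin d | mDim R ↥(F i) ≤ ((j : ℕ) : WithBot (WithTop ℕ))}
      = {j : Fin d | dI i ≤ (j : ℕ)} := by
    ext j
    simp only [Set.mem_setOf_eq, hdIi]
    exact hcast _ _
  set K : Submodule R M := J' • ⊤ with hKdef
  have hIJ : Ideal.span (Set.range x) = J ⊔ J' := by
    rw [hJdef, hJ'def, ← Ideal.span_union, ← Set.image_union, ← Set.image_univ]
    congr 1
    ext j
    simp [lt_or_ge]
  have hK : K ⊓ F i = ⊥ := by
    rcases lt_or_eq_of_le hit with hlt | heq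
    · have h := hgood i hlt
      rwa [hsetJ'] at h
    · have hFt : mDim R ↥(F i) = mDim R M := by
        rw [heq, hF.1]
        unfold mDim
        rw [Submodule.topEquiv.support_eq]
      have hd : (dI i : WithBot (WithTop ℕ)) = (d : WithBot (WithTop ℕ)) := by
        rw [← hdIi, hFt, hdim]
      have hdd : dI i = d := by exact_mod_cast hd
      have hempty : {j : Fin d | dI i ≤ (j : ℕ)} = ∅ := by
        ext j
        simp only [Set.mem_setOf_eq, hdd, Set.mem_empty_iff_false, iff_false]
        exact not_le.mpr j.isLt
      rw [hKdef, hJ'def, hempty]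
      simp
  have hinj : Function.Injective (K.mkQ ∘ₗ (F i).subtype) := by
    rw [← LinearMap.ker_eq_bot, LinearMap.ker_comp, Submodule.ker_mkQ]
    rw [Submodule.eq_bot_iff]
    rintro ⟨v, hv⟩ hvk
    have hmem2 : v ∈ K ⊓ F i := ⟨hvk, hv⟩
    rw [hK] at hmem2
    exact Subtype.ext (by simpa using hmem2)
  have hJQ : J ≤ Module.annihilator R (↥(F i) ⧸ (J • (⊤ : Submodule R ↥(F i)))) := by
    intro r hr
    rw [Module.mem_annihilator]
    intro q
    obtain ⟨v, rfl⟩ := Submodule.Quotient.mk_surjective _ q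
    rw [← Submodule.Quotient.mk_smul, Submodule.Quotient.mk_eq_zero]
    exact Submodule.smul_mem_smul hr Submodule.mem_top
  have hFiQ : Module.annihilator R ↥(F i)
      ≤ Module.annihilator R (↥(F i) ⧸ (J • (⊤ : Submodule R ↥(F i)))) :=
    LinearMap.annihilator_le_of_surjective (Submodule.mkQ _) (Submodule.Quotient.mk_surjective _)
  have hMK : Module.annihilator R (M ⧸ K) ≤ Module.annihilator R ↥(F i) :=
    LinearMap.annihilator_le_of_injective _ hinj
  have hmapJ : (J • (⊤ : Submodule R (M ⧸ K))) = (J • (⊤ : Submodule R M)).map K.mkQ := by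
    rw [Submodule.map_smul'', Submodule.map_top, Submodule.range_mkQ]
  have hsup : K ⊔ J • (⊤ : Submodule R M) = Ideal.span (Set.range x) • ⊤ := by
    rw [hIJ, Submodule.sup_smul, hKdef]
    exact sup_comm _ _
  let e : ((M ⧸ K) ⧸ (J • (⊤ : Submodule R (M ⧸ K)))) ≃ₗ[R]
      (M ⧸ (Ideal.span (Set.range x) • (⊤ : Submodule R M))) :=
    (Submodule.quotEquivOfEq _ _ hmapJ).trans
      ((Submodule.quotientQuotientEquivQuotientSup K (J • ⊤)).trans
        (Submodule.quotEquivOfEq _ _ hsup))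
  apply aux_finiteLength_of_max_le_radical
  rw [Ideal.radical_eq_sInf]
  refine le_sInf ?_
  rintro p ⟨hpQ, hp⟩
  refine aux_max_le_of_finiteLength hfl p hp ?_
  rw [← e.annihilator_eq]
  haveI : Module.Finite R (M ⧸ K) := Module.Finite.quotient R K
  exact aux_ann_quot_smul_le J p hp (le_trans hJQ hpQ) (le_trans (le_trans hMK hFiQ) hpQ)
end
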